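/- Let (μ_s) be θ-periodic probability measures with respect to a regular θ-periodic Markovian semigroup (P_{s,t}). Then for any s ≥ 0 and φ ∈ L²(ℝ^m; μ_s), the Cesàro averages (1/n) Σ_{i=1}^n P_{s,s+iθ} φ converge to the constant ∫ φ dμ_s in L²(ℝ^m; μ_s) as n → ∞. -/

import Mathlib

open MeasureTheory Filter
open scoped ENNReal NNReal

namespace Stmt9Aux

variable {α : Type*} [MeasurableSpace α]

/-- The one-step Markov operator on functions. -/
noncomputable def Tfun (K : α → Measure α) : (α → ℝ) → α → ℝ :=
  fun ψ x => ∫ y, ψ y ∂ K x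

variable {K : α → Measure α} {μ : Measure α}

lemma hlin (hKm : Measurable K) (hbind : μ.bind K = μ) {g : α → ℝ≥0∞}
    (hg : Measurable g) : ∫⁻ x, ∫⁻ y, g y ∂K x ∂μ = ∫⁻ y, g y ∂μ := by
  conv_rhs => rw [← hbind]
  rw [Measure.lintegral_bind hKm.aemeasurable hg.aemeasurable]

lemma null_transfer (hKm : Measurable K) (hbind : μ.bind K = μ) {N : Set α}
    (hN : μ N = 0) : ∀ᵐ x ∂μ, K x N = 0 := by
  set M := toMeasurable μ N with hMdef
  have hM : MeasurableSet M := measurableSet_toMeasurable μ N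
  have hμM : μ M = 0 := by rw [hMdef, measure_toMeasurable]; exact hN
  have h0 : ∫⁻ x, K x M ∂μ = 0 := by
    rw [← Measure.bind_apply hM hKm.aemeasurable, hbind]; exact hμM
  have hmeas : Measurable fun x => K x M := (Measure.measurable_coe hM).comp hKm
  have := (lintegral_eq_zero_iff hmeas).mp h0
  filter_upwards [this] with x hx
  exact le_antisymm (le_trans (measure_mono (subset_toMeasurable μ N)) hx.le) (zero_le)

lemma Tfun_congr (hKm : Measurable K) (hbind : μ.bind K = μ) {f g : α → ℝ}
    (h : f =ᵐ[μ] g) : Tfun K f =ᵐ[μ] Tfun K g := by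
  have hN : μ {x | f x ≠ g x} = 0 := h
  filter_upwards [null_transfer hKm hbind hN] with x hx
  exact integral_congr_ae hx

lemma enn_sq (a : ℝ) : (↑‖a‖₊ : ℝ≥0∞) ^ (2 : ℝ) = ENNReal.ofReal (a ^ 2) := by
  rw [← enorm_eq_nnnorm, ← ofReal_norm, Real.norm_eq_abs,
    ENNReal.ofReal_rpow_of_nonneg (abs_nonneg a) (by norm_num)]
  congr 1
  rw [show ((2:ℝ)) = ((2:ℕ):ℝ) by norm_num, Real.rpow_natCast, sq_abs]

lemma jensen_pointwise (hK : ∀ x, IsProbabilityMeasure (K x)) {ψ : α → ℝ}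
    (hψ : Measurable ψ) (x : α) :
    (↑‖Tfun K ψ x‖₊ : ℝ≥0∞) ^ (2 : ℝ) ≤ ∫⁻ y, (↑‖ψ y‖₊ : ℝ≥0∞) ^ (2 : ℝ) ∂K x := by
  haveI := hK x
  have h1 : (↑‖Tfun K ψ x‖₊ : ℝ≥0∞) ≤ ∫⁻ y, ↑‖ψ y‖₊ ∂K x :=
    enorm_integral_le_lintegral_enorm _
  have h2 : (∫⁻ y, (↑‖ψ y‖₊ : ℝ≥0∞) ∂K x)
      ≤ (∫⁻ y, (↑‖ψ y‖₊ : ℝ≥0∞) ^ (2:ℝ) ∂K x) ^ (1/2 : ℝ) := by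
    have hf : AEMeasurable (fun y => (↑‖ψ y‖₊ : ℝ≥0∞)) (K x) :=
      (hψ.nnnorm.coe_nnreal_ennreal).aemeasurable
    have := ENNReal.lintegral_mul_le_Lp_mul_Lq (K x)
      Real.HolderConjugate.two_two hf aemeasurable_const (g := fun _ => 1)
    simpa [measure_univ] using this
  calc (↑‖Tfun K ψ x‖₊ : ℝ≥0∞) ^ (2:ℝ)
      ≤ ((∫⁻ y, (↑‖ψ y‖₊ : ℝ≥0∞) ^ (2:ℝ) ∂K x) ^ (1/2 : ℝ)) ^ (2:ℝ) := by
        exact ENNReal.rpow_le_rpow (h1.trans h2) (by norm_num)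
    _ = ∫⁻ y, (↑‖ψ y‖₊ : ℝ≥0∞) ^ (2:ℝ) ∂K x := by
        rw [← ENNReal.rpow_mul]; norm_num


/-- The kernel built from `K`. -/
noncomputable def ker (K : α → Measure α) (hKm : Measurable K) :
    ProbabilityTheory.Kernel α α := ⟨K, hKm⟩

lemma measurable_Tfun (hK : ∀ x, IsProbabilityMeasure (K x)) (hKm : Measurable K)
    {ψ : α → ℝ} (hψ : Measurable ψ) : Measurable (Tfun K ψ) := by
  haveI : ProbabilityTheory.IsMarkovKernel (ker K hKm) := ⟨hK⟩
  have h : StronglyMeasurable (Function.uncurry fun (_ : α) (y : α) => ψ y) :=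
    (hψ.comp measurable_snd).stronglyMeasurable
  exact (h.integral_kernel_prod_right (κ := ker K hKm)).measurable

lemma measurable_lint_sq (hK : ∀ x, IsProbabilityMeasure (K x)) (hKm : Measurable K) {ψ : α → ℝ} (hψ : Measurable ψ) :
    Measurable fun x => ∫⁻ y, (↑‖ψ y‖₊ : ℝ≥0∞) ^ (2:ℝ) ∂K x := by
  have h : Measurable fun y => (↑‖ψ y‖₊ : ℝ≥0∞) ^ (2:ℝ) :=
    (hψ.nnnorm.coe_nnreal_ennreal).pow_const _
  haveI : ProbabilityTheory.IsMarkovKernel (ker K hKm) := ⟨fun x => hK x⟩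
  exact (Measurable.lintegral_kernel_prod_right (κ := ker K hKm)
    (f := fun (_ : α) (y : α) => (↑‖ψ y‖₊ : ℝ≥0∞) ^ (2:ℝ)) (h.comp measurable_snd))

lemma eLpNorm_Tfun_le (hK : ∀ x, IsProbabilityMeasure (K x)) (hKm : Measurable K)
    (hbind : μ.bind K = μ) {ψ : α → ℝ} (hψ : Measurable ψ) :
    eLpNorm (Tfun K ψ) 2 μ ≤ eLpNorm ψ 2 μ := by
  rw [eLpNorm_eq_lintegral_rpow_enorm_toReal two_ne_zero ENNReal.ofNat_ne_top,
    eLpNorm_eq_lintegral_rpow_enorm_toReal two_ne_zero ENNReal.ofNat_ne_top]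
  simp only [ENNReal.toReal_ofNat, enorm_eq_nnnorm]
  refine ENNReal.rpow_le_rpow ?_ (by norm_num)
  calc ∫⁻ x, (↑‖Tfun K ψ x‖₊ : ℝ≥0∞) ^ (2:ℝ) ∂μ
      ≤ ∫⁻ x, ∫⁻ y, (↑‖ψ y‖₊ : ℝ≥0∞) ^ (2:ℝ) ∂K x ∂μ :=
        lintegral_mono (jensen_pointwise hK hψ)
    _ = ∫⁻ y, (↑‖ψ y‖₊ : ℝ≥0∞) ^ (2:ℝ) ∂μ :=
        hlin hKm hbind ((hψ.nnnorm.coe_nnreal_ennreal).pow_const _)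

lemma lintegral_sq_lt_top {ψ : α → ℝ} (h2 : MemLp ψ 2 μ) :
    ∫⁻ y, (↑‖ψ y‖₊ : ℝ≥0∞) ^ (2:ℝ) ∂μ < ⊤ := by
  have := h2.2
  rw [eLpNorm_eq_lintegral_rpow_enorm_toReal two_ne_zero ENNReal.ofNat_ne_top] at this
  simp only [ENNReal.toReal_ofNat, enorm_eq_nnnorm] at this
  have h := ENNReal.rpow_lt_top_of_nonneg (by norm_num : (0:ℝ) ≤ 2) (by
    intro h
    rw [h] at this
    simp [ENNReal.top_rpow_of_pos] at this : (∫⁻ y, (↑‖ψ y‖₊ : ℝ≥0∞) ^ (2:ℝ) ∂μ) ≠ ⊤)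
  exact lt_top_iff_ne_top.mpr (by
    intro hc
    rw [hc] at this
    simp [ENNReal.top_rpow_of_pos] at this)

lemma memℒp_Tfun (hK : ∀ x, IsProbabilityMeasure (K x)) (hKm : Measurable K)
    (hbind : μ.bind K = μ) {ψ : α → ℝ} (hψ : Measurable ψ) (h2 : MemLp ψ 2 μ) :
    MemLp (Tfun K ψ) 2 μ :=
  ⟨(measurable_Tfun hK hKm hψ).aestronglyMeasurable,
    lt_of_le_of_lt (eLpNorm_Tfun_le hK hKm hbind hψ) h2.2⟩

lemma memℒp_Tfun' (hK : ∀ x, IsProbabilityMeasure (K x)) (hKm : Measurable K)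
    (hbind : μ.bind K = μ) {f : α → ℝ} (h2 : MemLp f 2 μ) :
    MemLp (Tfun K f) 2 μ := by
  obtain ⟨g, hgm, hfg⟩ := h2.1
  have hg2 : MemLp g 2 μ := h2.ae_eq hfg
  exact (memℒp_Tfun hK hKm hbind hgm.measurable hg2).ae_eq
    (Tfun_congr hKm hbind hfg.symm)

lemma memℒp_ae_kernel (hK : ∀ x, IsProbabilityMeasure (K x)) (hKm : Measurable K)
    (hbind : μ.bind K = μ) {ψ : α → ℝ} (hψ : Measurable ψ) (h2 : MemLp ψ 2 μ) :
    ∀ᵐ x ∂μ, MemLp ψ 2 (K x) := by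
  have hfin : ∫⁻ x, ∫⁻ y, (↑‖ψ y‖₊ : ℝ≥0∞) ^ (2:ℝ) ∂K x ∂μ < ⊤ := by
    rw [hlin hKm hbind ((hψ.nnnorm.coe_nnreal_ennreal).pow_const _)]
    exact lintegral_sq_lt_top h2
  filter_upwards [ae_lt_top (measurable_lint_sq hK hKm hψ) hfin.ne] with x hx
  refine ⟨hψ.aestronglyMeasurable, ?_⟩
  rw [eLpNorm_eq_lintegral_rpow_enorm_toReal two_ne_zero ENNReal.ofNat_ne_top]
  simp only [ENNReal.toReal_ofNat, enorm_eq_nnnorm]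
  exact ENNReal.rpow_lt_top_of_nonneg (by norm_num) hx.ne

lemma integrable_ae_kernel (hK : ∀ x, IsProbabilityMeasure (K x)) (hKm : Measurable K)
    (hbind : μ.bind K = μ) {f : α → ℝ} (h2 : MemLp f 2 μ) :
    ∀ᵐ x ∂μ, Integrable f (K x) := by
  obtain ⟨g, hgm, hfg⟩ := h2.1
  have hg2 : MemLp g 2 μ := h2.ae_eq hfg
  have hN : μ {x | f x ≠ g x} = 0 := hfg
  filter_upwards [memℒp_ae_kernel hK hKm hbind hgm.measurable hg2,
    null_transfer hKm hbind hN] with x hx hnull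
  haveI := hK x
  exact (hx.integrable one_le_two).congr (Filter.EventuallyEq.symm hnull)


lemma fixed_ae_const (hK : ∀ x, IsProbabilityMeasure (K x)) (hKm : Measurable K)
    (hreg : ∀ x y, K x ≪ K y) (hμ : IsProbabilityMeasure μ) (hbind : μ.bind K = μ)
    {f : α → ℝ} (h2 : MemLp f 2 μ) (hfix : Tfun K f =ᵐ[μ] f) :
    ∃ c : ℝ, f =ᵐ[μ] fun _ => c := by
  obtain ⟨g, hgm', hfg⟩ := h2.1
  have hgm : Measurable g := hgm'.measurable
  have hg2 : MemLp g 2 μ := h2.ae_eq hfg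
  have hfixg : Tfun K g =ᵐ[μ] g := (Tfun_congr hKm hbind hfg.symm).trans (hfix.trans hfg)
  suffices h : ∃ c, g =ᵐ[μ] fun _ => c by
    obtain ⟨c, hc⟩ := h; exact ⟨c, hfg.trans hc⟩
  set Tg := Tfun K g with hTgdef
  have hTgm : Measurable Tg := measurable_Tfun hK hKm hgm
  set v : α → ℝ := fun x => ∫ y, (g y - Tg x) ^ 2 ∂K x with hvdef
  -- measurability of v
  haveI : ProbabilityTheory.IsMarkovKernel (ker K hKm) := ⟨fun x => hK x⟩
  have hvm : Measurable v := by
    have hF : StronglyMeasurable (fun p : α × α => (g p.2 - Tg p.1) ^ 2) :=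
      (((hgm.comp measurable_snd).sub (hTgm.comp measurable_fst)).pow_const 2).stronglyMeasurable
    exact (hF.integral_kernel_prod_right' (κ := ker K hKm)).measurable
  -- Claim A
  have hA : ∀ᵐ x ∂μ, ENNReal.ofReal (v x)
      = (∫⁻ y, (↑‖g y‖₊ : ℝ≥0∞) ^ (2:ℝ) ∂K x) - (↑‖Tg x‖₊ : ℝ≥0∞) ^ (2:ℝ) := by
    filter_upwards [memℒp_ae_kernel hK hKm hbind hgm hg2] with x hx
    haveI := hK x
    have hint : Integrable g (K x) := hx.integrable one_le_two
    have hsq : Integrable (fun y => g y ^ 2) (K x) := hx.integrable_sq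
    have hvx : v x = (∫ y, g y ^ 2 ∂K x) - Tg x ^ 2 := by
      have e1 : v x = ∫ y, (g y ^ 2 - (2 * Tg x) * g y + Tg x ^ 2) ∂K x := by
        simp only [hvdef]; congr 1; funext y; ring
      have hintg : Integrable (fun y => (2 * Tg x) * g y) (K x) := hint.const_mul _
      have hInt1 : Integrable (fun y => g y ^ 2 - 2 * Tg x * g y) (K x) := hsq.sub hintg
      rw [e1, integral_add (f := fun y => g y ^ 2 - 2 * Tg x * g y) hInt1 (integrable_const _),
        integral_sub (f := fun y => g y ^ 2) (g := fun y => 2 * Tg x * g y) hsq hintg,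
        integral_const, integral_const_mul]
      have : ∫ y, g y ∂K x = Tg x := rfl
      rw [this]
      simp [measure_univ]
      ring
    have hps : ENNReal.ofReal (∫ y, g y ^ 2 ∂K x) = ∫⁻ y, (↑‖g y‖₊ : ℝ≥0∞) ^ (2:ℝ) ∂K x := by
      rw [ofReal_integral_eq_lintegral_ofReal hsq (ae_of_all _ fun y => sq_nonneg _)]
      exact lintegral_congr fun y => (enn_sq (g y)).symm
    rw [hvx, ENNReal.ofReal_sub _ (sq_nonneg _), hps, enn_sq]
  -- Claim B : total integral is zero
  have hB : ∫⁻ x, ENNReal.ofReal (v x) ∂μ = 0 := by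
    have hTgsq : (fun x => (↑‖Tg x‖₊ : ℝ≥0∞) ^ (2:ℝ)) =ᵐ[μ]
        (fun x => (↑‖g x‖₊ : ℝ≥0∞) ^ (2:ℝ)) := by
      filter_upwards [hfixg] with x hx; rw [hx]
    have hTgfin : ∫⁻ x, (↑‖Tg x‖₊ : ℝ≥0∞) ^ (2:ℝ) ∂μ ≠ ⊤ := by
      rw [lintegral_congr_ae hTgsq]; exact (lintegral_sq_lt_top hg2).ne
    rw [lintegral_congr_ae hA,
      lintegral_sub ((hTgm.nnnorm.coe_nnreal_ennreal).pow_const _) hTgfin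
        (ae_of_all _ (jensen_pointwise hK hgm)),
      hlin hKm hbind ((hgm.nnnorm.coe_nnreal_ennreal).pow_const _),
      lintegral_congr_ae hTgsq, tsub_self]
  -- Claim C : v = 0 a.e.
  have hC : ∀ᵐ x ∂μ, v x = 0 := by
    have := (lintegral_eq_zero_iff hvm.ennreal_ofReal).mp hB
    filter_upwards [this] with x hx
    have h0 : 0 ≤ v x := integral_nonneg fun y => sq_nonneg _
    have := ENNReal.ofReal_eq_zero.mp hx
    linarith
  -- Claim D : a.e. x, g is Kx-a.e. equal to Tg x
  have hD : ∀ᵐ x ∂μ, ∀ᵐ y ∂K x, g y = Tg x := by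
    filter_upwards [hC, memℒp_ae_kernel hK hKm hbind hgm hg2] with x hvx hx
    haveI := hK x
    have hintsq : Integrable (fun y => (g y - Tg x) ^ 2) (K x) :=
      (hx.sub (memLp_const _)).integrable_sq
    have := (integral_eq_zero_iff_of_nonneg (fun y => sq_nonneg _) hintsq).mp hvx
    filter_upwards [this] with y hy
    have : g y - Tg x = 0 := by
      have := hy
      simpa [pow_eq_zero_iff] using this
    linarith
  -- pick x₀
  haveI : (ae μ).NeBot := ae_neBot.mpr (IsProbabilityMeasure.ne_zero μ)
  obtain ⟨x₀, hx₀⟩ := hD.exists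
  refine ⟨Tg x₀, ?_⟩
  have hKx₀ : K x₀ {y | ¬ g y = Tg x₀} = 0 := hx₀
  have hall : ∀ x, ∀ᵐ y ∂K x, g y = Tg x₀ := fun x => hreg x x₀ hKx₀
  have hTgc : ∀ᵐ x ∂μ, Tg x = Tg x₀ := by
    filter_upwards [hD] with x hx
    haveI := hK x
    haveI : (ae (K x)).NeBot := ae_neBot.mpr (IsProbabilityMeasure.ne_zero (K x))
    obtain ⟨y, hy1, hy2⟩ := (hx.and (hall x)).exists
    rw [← hy1, hy2]
  exact (hfixg.symm.trans hTgc : g =ᵐ[μ] fun _ => Tg x₀)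

lemma integral_Tfun_nonneg (hK : ∀ x, IsProbabilityMeasure (K x)) (hKm : Measurable K)
    (hbind : μ.bind K = μ) {h : α → ℝ} (hm : Measurable h) (hnn : ∀ y, 0 ≤ h y)
    (h2 : MemLp h 2 μ) : ∫ x, Tfun K h x ∂μ = ∫ y, h y ∂μ := by
  have hTm : Measurable (Tfun K h) := measurable_Tfun hK hKm hm
  have hTnn : ∀ x, 0 ≤ Tfun K h x := fun x => integral_nonneg hnn
  rw [integral_eq_lintegral_of_nonneg_ae (ae_of_all _ hTnn) hTm.aestronglyMeasurable,
      integral_eq_lintegral_of_nonneg_ae (ae_of_all _ hnn) hm.aestronglyMeasurable]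
  congr 1
  have hae : ∀ᵐ x ∂μ, ENNReal.ofReal (Tfun K h x) = ∫⁻ y, ENNReal.ofReal (h y) ∂K x := by
    filter_upwards [integrable_ae_kernel hK hKm hbind h2] with x hx
    exact ofReal_integral_eq_lintegral_ofReal hx (ae_of_all _ hnn)
  rw [lintegral_congr_ae hae, hlin hKm hbind hm.ennreal_ofReal]

lemma integral_Tfun (hK : ∀ x, IsProbabilityMeasure (K x)) (hKm : Measurable K)
    (hμ : IsProbabilityMeasure μ) (hbind : μ.bind K = μ) {ψ : α → ℝ}
    (hm : Measurable ψ) (h2 : MemLp ψ 2 μ) :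
    ∫ x, Tfun K ψ x ∂μ = ∫ y, ψ y ∂μ := by
  set p : α → ℝ := fun y => max (ψ y) 0 with hpdef
  set q : α → ℝ := fun y => max (-ψ y) 0 with hqdef
  have hpm : Measurable p := hm.max measurable_const
  have hqm : Measurable q := hm.neg.max measurable_const
  have hp2 : MemLp p 2 μ := h2.pos_part
  have hq2 : MemLp q 2 μ := h2.neg_part
  have hψeq : ∀ y, ψ y = p y - q y := fun y => (max_zero_sub_eq_self (ψ y)).symm
  have hsplit : ∀ᵐ x ∂μ, Tfun K ψ x = Tfun K p x - Tfun K q x := by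
    filter_upwards [integrable_ae_kernel hK hKm hbind h2] with x hx
    have hip : Integrable p (K x) := hx.pos_part
    have hiq : Integrable q (K x) := hx.neg.pos_part
    have : Tfun K ψ x = ∫ y, (p y - q y) ∂K x := by
      simp only [Tfun]; congr 1; funext y; exact hψeq y
    rw [this, integral_sub hip hiq]; rfl
  have hTp : Integrable (Tfun K p) μ := (memℒp_Tfun hK hKm hbind hpm hp2).integrable one_le_two
  have hTq : Integrable (Tfun K q) μ := (memℒp_Tfun hK hKm hbind hqm hq2).integrable one_le_two
  rw [integral_congr_ae hsplit, integral_sub hTp hTq,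
    integral_Tfun_nonneg hK hKm hbind hpm (fun y => le_max_right _ _) hp2,
    integral_Tfun_nonneg hK hKm hbind hqm (fun y => le_max_right _ _) hq2,
    ← integral_sub (hp2.integrable one_le_two) (hq2.integrable one_le_two)]
  congr 1; funext y; exact (hψeq y).symm


lemma eLpNorm_Tfun_le' (hK : ∀ x, IsProbabilityMeasure (K x)) (hKm : Measurable K)
    (hbind : μ.bind K = μ) {f : α → ℝ} (h2 : MemLp f 2 μ) :
    eLpNorm (Tfun K f) 2 μ ≤ eLpNorm f 2 μ := by
  obtain ⟨g, hgm, hfg⟩ := h2.1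
  calc eLpNorm (Tfun K f) 2 μ
      = eLpNorm (Tfun K g) 2 μ := eLpNorm_congr_ae (Tfun_congr hKm hbind hfg)
    _ ≤ eLpNorm g 2 μ := eLpNorm_Tfun_le hK hKm hbind hgm.measurable
    _ = eLpNorm f 2 μ := (eLpNorm_congr_ae hfg).symm

variable (K μ) in
/-- The Markov operator as a continuous linear map on `L²`. -/
noncomputable def Top (hK : ∀ x, IsProbabilityMeasure (K x)) (hKm : Measurable K)
    (hbind : μ.bind K = μ) : Lp ℝ 2 μ →L[ℝ] Lp ℝ 2 μ :=
  LinearMap.mkContinuous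
    { toFun := fun f => MemLp.toLp (Tfun K ⇑f) (memℒp_Tfun' hK hKm hbind (Lp.memLp f))
      map_add' := by
        intro f g
        refine Lp.ext ?_
        have h1 := MemLp.coeFn_toLp (memℒp_Tfun' hK hKm hbind (Lp.memLp (f + g)))
        have h2 := MemLp.coeFn_toLp (memℒp_Tfun' hK hKm hbind (Lp.memLp f))
        have h3 := MemLp.coeFn_toLp (memℒp_Tfun' hK hKm hbind (Lp.memLp g))
        have hc : Tfun K ⇑(f + g) =ᵐ[μ] Tfun K (⇑f + ⇑g) :=
          Tfun_congr hKm hbind (Lp.coeFn_add f g)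
        have hadd : Tfun K (⇑f + ⇑g) =ᵐ[μ] Tfun K ⇑f + Tfun K ⇑g := by
          filter_upwards [integrable_ae_kernel hK hKm hbind (Lp.memLp f),
            integrable_ae_kernel hK hKm hbind (Lp.memLp g)] with x hxf hxg
          simp only [Tfun, Pi.add_apply]
          exact integral_add hxf hxg
        exact h1.trans ((hc.trans hadd).trans
          ((h2.symm.add h3.symm).trans (Lp.coeFn_add _ _).symm))
      map_smul' := by
        intro c f
        refine Lp.ext ?_
        have h1 := MemLp.coeFn_toLp (memℒp_Tfun' hK hKm hbind (Lp.memLp (c • f)))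
        have h2 := MemLp.coeFn_toLp (memℒp_Tfun' hK hKm hbind (Lp.memLp f))
        have hc : Tfun K ⇑(c • f) =ᵐ[μ] Tfun K (c • ⇑f) :=
          Tfun_congr hKm hbind (Lp.coeFn_smul c f)
        have hsmul : Tfun K (c • ⇑f) = c • Tfun K ⇑f := by
          funext x
          simp only [Tfun, Pi.smul_apply, smul_eq_mul]
          exact integral_const_mul c _
        refine h1.trans ((hc.trans ?_).trans (Lp.coeFn_smul c _).symm)
        rw [hsmul]
        exact h2.symm.const_smul c }
    1 (by
      intro f
      rw [one_mul]
      simp only [LinearMap.coe_mk, AddHom.coe_mk]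
      rw [Lp.norm_toLp, Lp.norm_def]
      exact ENNReal.toReal_mono (Lp.eLpNorm_ne_top f)
        (eLpNorm_Tfun_le' hK hKm hbind (Lp.memLp f)))

lemma Top_coeFn (hK : ∀ x, IsProbabilityMeasure (K x)) (hKm : Measurable K)
    (hbind : μ.bind K = μ) (f : Lp ℝ 2 μ) :
    ⇑(Top K μ hK hKm hbind f) =ᵐ[μ] Tfun K ⇑f :=
  MemLp.coeFn_toLp (memℒp_Tfun' hK hKm hbind (Lp.memLp f))

lemma Top_norm_le (hK : ∀ x, IsProbabilityMeasure (K x)) (hKm : Measurable K)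
    (hbind : μ.bind K = μ) : ‖Top K μ hK hKm hbind‖ ≤ 1 :=
  LinearMap.mkContinuous_norm_le _ zero_le_one _


set_option synthInstance.maxHeartbeats 1000000 in
set_option maxHeartbeats 2000000 in
theorem main (hK : ∀ x, IsProbabilityMeasure (K x)) (hKm : Measurable K)
    (hreg : ∀ x y, K x ≪ K y) (hμ : IsProbabilityMeasure μ) (hbind : μ.bind K = μ)
    {φ : α → ℝ} (hφm : Measurable φ) (hφ2 : MemLp φ 2 μ) :
    Tendsto (fun n : ℕ => ∫ x, ((n : ℝ)⁻¹ * (∑ i ∈ Finset.range n, ((Tfun K)^[i + 1] φ) x)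
      - ∫ y, φ y ∂μ) ^ 2 ∂μ) atTop (nhds 0) := by
  set T := Top K μ hK hKm hbind with hTdef
  set φL := hφ2.toLp φ with hφLdef
  haveI : CompleteSpace ↥(LinearMap.eqLocus (T : Lp ℝ 2 μ →ₗ[ℝ] Lp ℝ 2 μ) 1) :=
    (isClosed_eq T.continuous continuous_id).completeSpace_coe
  have key := T.tendsto_birkhoffAverage_orthogonalProjection (Top_norm_le hK hKm hbind) (T φL)
  set P := (LinearMap.eqLocus (T : Lp ℝ 2 μ →ₗ[ℝ] Lp ℝ 2 μ) ((1 : Lp ℝ 2 μ →L[ℝ] Lp ℝ 2 μ) : Lp ℝ 2 μ →ₗ[ℝ] Lp ℝ 2 μ)).orthogonalProjectionOnto (T φL)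
    with hPdef
  have hfixL : T (↑P : Lp ℝ 2 μ) = ↑P := by
    have h := P.2
    rw [LinearMap.mem_eqLocus] at h
    simpa using h
  have hfixfun : Tfun K ⇑(P : Lp ℝ 2 μ) =ᵐ[μ] ⇑(P : Lp ℝ 2 μ) := by
    have h := Top_coeFn hK hKm hbind (↑P : Lp ℝ 2 μ)
    rw [hfixL] at h
    exact h.symm
  obtain ⟨c, hc⟩ := fixed_ae_const hK hKm hreg hμ hbind (Lp.memLp (↑P : Lp ℝ 2 μ)) hfixfun
  -- the constant one function
  set one : Lp ℝ 2 μ := (memLp_const (1:ℝ)).toLp _ with honedef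
  have honeFn : ⇑one =ᵐ[μ] fun _ => (1:ℝ) := MemLp.coeFn_toLp _
  have hTone : T one = one := by
    refine Lp.ext ?_
    refine (Top_coeFn hK hKm hbind one).trans ?_
    refine ((Tfun_congr hKm hbind honeFn).trans ?_).trans honeFn.symm
    have h1 : Tfun K (fun _ => (1:ℝ)) = fun _ => (1:ℝ) := by
      funext x
      haveI := hK x
      simp [Tfun]
    rw [h1]
  have honeS : one ∈ LinearMap.eqLocus (T : Lp ℝ 2 μ →ₗ[ℝ] Lp ℝ 2 μ) ((1 : Lp ℝ 2 μ →L[ℝ] Lp ℝ 2 μ) : Lp ℝ 2 μ →ₗ[ℝ] Lp ℝ 2 μ) :=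
    LinearMap.mem_eqLocus.mpr (by simpa using hTone)
  have hperp := Submodule.sub_starProjection_mem_orthogonal
    (K := LinearMap.eqLocus (T : Lp ℝ 2 μ →ₗ[ℝ] Lp ℝ 2 μ) ((1 : Lp ℝ 2 μ →L[ℝ] Lp ℝ 2 μ) : Lp ℝ 2 μ →ₗ[ℝ] Lp ℝ 2 μ)) (T φL)
  have hinner : (inner ℝ one (T φL - ↑P) : ℝ) = 0 :=
    Submodule.inner_right_of_mem_orthogonal honeS hperp
  have hint0 : ∫ a, ⇑one a * ⇑(T φL - (↑P : Lp ℝ 2 μ)) a ∂μ = 0 := by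
    rw [L2.inner_def] at hinner
    simpa [RCLike.inner_apply, mul_comm] using hinner
  have hintTP : ∫ a, ⇑(T φL) a ∂μ = ∫ a, ⇑(P : Lp ℝ 2 μ) a ∂μ := by
    haveI := hμ
    have h1 : ∫ a, ⇑(T φL - (↑P : Lp ℝ 2 μ)) a ∂μ = 0 := by
      rw [← hint0]
      refine integral_congr_ae ?_
      filter_upwards [honeFn] with a ha
      rw [ha, one_mul]
    have h2 : ∫ a, (⇑(T φL) a - ⇑(P : Lp ℝ 2 μ) a) ∂μ = 0 := by
      rw [← h1]
      exact integral_congr_ae (Lp.coeFn_sub _ _).symm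
    have h3 := integral_sub ((Lp.memLp (T φL)).integrable one_le_two)
      ((Lp.memLp (↑P : Lp ℝ 2 μ)).integrable one_le_two)
    rw [h3] at h2
    linarith
  haveI := hμ
  have hPint : ∫ a, ⇑(P : Lp ℝ 2 μ) a ∂μ = c := by
    rw [integral_congr_ae hc]
    simp
  have hTφint : ∫ a, ⇑(T φL) a ∂μ = ∫ y, φ y ∂μ := by
    rw [integral_congr_ae ((Top_coeFn hK hKm hbind φL).trans
      (Tfun_congr hKm hbind (MemLp.coeFn_toLp hφ2)))]
    exact integral_Tfun hK hKm hμ hbind hφm hφ2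
  have hceq : c = ∫ y, φ y ∂μ := by rw [← hPint, ← hintTP, hTφint]
  rw [hceq] at hc
  set C : Lp ℝ 2 μ := (memLp_const (∫ y, φ y ∂μ)).toLp _ with hCdef
  have hCfn : ⇑C =ᵐ[μ] fun _ => ∫ y, φ y ∂μ := MemLp.coeFn_toLp _
  have hPC : (↑P : Lp ℝ 2 μ) = C := Lp.ext (hc.trans hCfn.symm)
  rw [hPC] at key
  -- convergence of norms squared
  have hnorm : Tendsto (fun n => ‖birkhoffAverage ℝ ⇑T _root_.id n (T φL) - C‖ ^ 2)
      atTop (nhds 0) := by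
    have h1 := (key.sub (tendsto_const_nhds (x := C))).norm
    simp only [sub_self, norm_zero] at h1
    have h2 := h1.pow 2
    simpa using h2
  -- identify the integrals with the norms
  refine Tendsto.congr (fun n => ?_) hnorm
  -- a.e. identification of iterates
  have hiter : ∀ i : ℕ, ⇑((⇑T)^[i] φL) =ᵐ[μ] (Tfun K)^[i] φ := by
    intro i
    induction i with
    | zero => simpa using MemLp.coeFn_toLp hφ2
    | succ i ih =>
      rw [Function.iterate_succ_apply', Function.iterate_succ_apply']
      exact (Top_coeFn hK hKm hbind _).trans (Tfun_congr hKm hbind ih)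
  have hsum : ∀ n : ℕ, ⇑(∑ i ∈ Finset.range n, (⇑T)^[i + 1] φL) =ᵐ[μ]
      fun x => ∑ i ∈ Finset.range n, ((Tfun K)^[i + 1] φ) x := by
    intro n
    induction n with
    | zero => simpa [Pi.zero_def] using Lp.coeFn_zero (E := ℝ) (p := 2) (μ := μ)
    | succ n ih =>
      rw [Finset.sum_range_succ]
      refine (Lp.coeFn_add _ _).trans ?_
      filter_upwards [ih, hiter (n + 1)] with x h1 h2
      simp only [Pi.add_apply, h1, h2, Finset.sum_range_succ]
  have hA : ⇑(birkhoffAverage ℝ ⇑T _root_.id n (T φL)) =ᵐ[μ]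
      fun x => (n : ℝ)⁻¹ * (∑ i ∈ Finset.range n, ((Tfun K)^[i + 1] φ) x) := by
    have h0 : birkhoffAverage ℝ ⇑T _root_.id n (T φL)
        = (n : ℝ)⁻¹ • (∑ i ∈ Finset.range n, (⇑T)^[i + 1] φL) := by
      rw [birkhoffAverage, birkhoffSum]
      congr 1
    rw [h0]
    refine (Lp.coeFn_smul _ _).trans ?_
    filter_upwards [hsum n] with x hx
    simp only [Pi.smul_apply, smul_eq_mul, hx]
  set D := birkhoffAverage ℝ ⇑T _root_.id n (T φL) - C with hDdef
  have hdiff : (fun x => ((n : ℝ)⁻¹ * (∑ i ∈ Finset.range n, ((Tfun K)^[i + 1] φ) x)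
      - ∫ y, φ y ∂μ) ^ 2) =ᵐ[μ] fun x => ⇑D x * ⇑D x := by
    have h1 : ⇑D =ᵐ[μ] fun x => (n : ℝ)⁻¹ * (∑ i ∈ Finset.range n, ((Tfun K)^[i + 1] φ) x)
        - ∫ y, φ y ∂μ := by
      refine (Lp.coeFn_sub _ _).trans ?_
      filter_upwards [hA, hCfn] with x hx hx2
      simp only [Pi.sub_apply, hx, hx2]
    filter_upwards [h1] with x hx
    rw [hx]
    ring
  rw [integral_congr_ae hdiff]
  have hnormD : ∫ x, ⇑D x * ⇑D x ∂μ = ‖D‖ ^ 2 := by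
    have hi : (inner ℝ D D : ℝ) = ∫ x, ⇑D x * ⇑D x ∂μ := by
      rw [L2.inner_def]
      simp [RCLike.inner_apply, sq]
    rw [← real_inner_self_eq_norm_sq, hi]
  rw [hnormD]

end Stmt9Aux

/-- Mean (Cesàro) ergodic convergence of the one-period Markov operator of a
regular kernel towards the mean with respect to the periodic measure, in `L²(μ)`.
Here `K` is the one-period kernel `P(s, ·, s+θ, ·)`, so that
`P_{s,s+iθ} φ = T^[i] φ` with `T ψ x = ∫ ψ dK x`. -/
theorem stmt_9 (m : ℕ) (K : (Fin m → ℝ) → Measure (Fin m → ℝ))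
    (hK : ∀ x, IsProbabilityMeasure (K x))
    (hKmeas : ∀ A : Set (Fin m → ℝ), MeasurableSet A → Measurable fun x => K x A)
    (hreg : ∀ x y, K x ≪ K y)
    (μ : Measure (Fin m → ℝ)) (hμ : IsProbabilityMeasure μ)
    (hinv : ∀ A : Set (Fin m → ℝ), MeasurableSet A → μ A = ∫⁻ x, K x A ∂μ)
    (φ : (Fin m → ℝ) → ℝ) (hφmeas : Measurable φ) (hφL2 : MemLp φ 2 μ) :
    Tendsto
      (fun n : ℕ => ∫ x,
        ((n : ℝ)⁻¹ * (∑ i ∈ Finset.range n,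
            ((fun (ψ : (Fin m → ℝ) → ℝ) (z : Fin m → ℝ) => ∫ y, ψ y ∂ K z)^[i + 1] φ) x)
          - ∫ y, φ y ∂μ) ^ 2 ∂μ)
      atTop (nhds 0) := by
  have hKm : Measurable K := Measure.measurable_of_measurable_coe K hKmeas
  have hbind : μ.bind K = μ := by
    refine Measure.ext fun A hA => ?_
    rw [Measure.bind_apply hA hKm.aemeasurable]
    exact (hinv A hA).symm
  exact Stmt9Aux.main hK hKm hreg hμ hbind hφmeas hφL2
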